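/- If a polynomial P(x) = ((x^2 - c_1)^2 - c_2)^2 - ... - c_k over a unique factorization domain D with 1+1 ≠ 0 splits into a product of linear factors over D, and c_k ≠ 0, then P has at least 2^(k-1) + 1 distinct roots in D. -/
import Mathlib


open Polynomial

noncomputable def chain {D : Type*} [CommRing D] (c : ℕ → D) : ℕ → Polynomial D
  | 0 => X
  | j + 1 => (chain c j) ^ 2 - C (c (j + 1))

def Crumbles {D : Type*} [CommRing D] (P : Polynomial D) : Prop :=
  ∃ s : Multiset (Polynomial D), (∀ q ∈ s, q.degree = 1) ∧ P = s.prod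

section Helpers

variable {D : Type*} [CommRing D] [IsDomain D]

/-- A product of degree-one polynomials with unit leading coefficient is a constant times a
product of monic linear factors. -/
lemma exists_unit_split (s : Multiset (Polynomial D)) :
    (∀ q ∈ s, q.degree = 1) → IsUnit (s.prod).leadingCoeff →
    ∃ (a : D) (m : Multiset D), s.prod = C a * (m.map fun r => X - C r).prod := by
  induction s using Multiset.induction_on with
  | empty => intro _ _; exact ⟨1, 0, by simp⟩
  | cons q s ih =>
    intro hdeg hunit
    rw [Multiset.prod_cons] at hunit ⊢
    rw [leadingCoeff_mul] at hunit
    have hqdeg : q.degree = 1 := hdeg q (Multiset.mem_cons_self q s)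
    have hqnd : q.natDegree = 1 := natDegree_eq_of_degree_eq_some hqdeg
    have hqu : IsUnit q.leadingCoeff := isUnit_of_mul_isUnit_left hunit
    have hsu : IsUnit (s.prod).leadingCoeff :=
      isUnit_of_mul_isUnit_left (by rwa [mul_comm] at hunit)
    obtain ⟨a', m, hm⟩ := ih (fun p hp => hdeg p (Multiset.mem_cons_of_mem hp)) hsu
    obtain ⟨u, hu⟩ := hqu
    have hlc : q.leadingCoeff = q.coeff 1 := by
      rw [leadingCoeff, hqnd]
    have h2 : q.coeff 1 * (↑u⁻¹ * q.coeff 0) = q.coeff 0 := by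
      rw [← mul_assoc, ← hlc, ← hu, Units.mul_inv, one_mul]
    have hq : q = C (q.coeff 1) * (X - C (-(↑u⁻¹ * q.coeff 0))) := by
      have h1 : q = C (q.coeff 1) * X + C (q.coeff 0) :=
        eq_X_add_C_of_degree_le_one (le_of_eq hqdeg)
      have h3 : C (q.coeff 1) * (X - C (-(↑u⁻¹ * q.coeff 0))) =
          C (q.coeff 1) * X + C (q.coeff 0) := by
        rw [mul_sub, ← C_mul, mul_neg, h2, map_neg, sub_neg_eq_add]
      rw [h3]; exact h1
    refine ⟨q.coeff 1 * a', (-(↑u⁻¹ * q.coeff 0)) ::ₘ m, ?_⟩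
    conv_lhs => rw [hq, hm]
    rw [Multiset.map_cons, Multiset.prod_cons, C_mul]
    ring

/-- A monic polynomial that crumbles is a product of monic linear factors. -/
lemma monic_crumbles_eq {P : Polynomial D} (hP : Crumbles P) (hm : P.Monic) :
    ∃ m : Multiset D, P = (m.map fun r => X - C r).prod := by
  obtain ⟨s, hs, rfl⟩ := hP
  obtain ⟨a, m, hm'⟩ := exists_unit_split s hs (hm ▸ isUnit_one)
  have hmon : ((m.map fun r => X - C r).prod).Monic :=
    monic_multiset_prod_of_monic _ _ (fun r _ => monic_X_sub_C r)
  have ha : a = 1 := by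
    have := hm
    rw [Monic, hm', leadingCoeff_mul, leadingCoeff_C, hmon.leadingCoeff, mul_one] at this
    exact this
  exact ⟨m, by rw [hm', ha, map_one, one_mul]⟩

/-- A monic divisor of a crumbling monic polynomial crumbles, and has a full set of roots. -/
lemma crumbles_of_dvd {P q : Polynomial D} (hP : Crumbles P) (hPm : P.Monic)
    (hdvd : q ∣ P) (hqm : q.Monic) :
    Crumbles q ∧ Multiset.card q.roots = q.natDegree := by
  obtain ⟨m, hPe⟩ := monic_crumbles_eq hP hPm
  obtain ⟨e, he⟩ := hdvd
  have hem : e.Monic := Monic.of_mul_monic_left hqm (he ▸ hPm)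
  have hP0 : P ≠ 0 := hPm.ne_zero
  have hroots : P.roots = q.roots + e.roots := by
    rw [he]; exact roots_mul (he ▸ hP0)
  have hPcard : Multiset.card P.roots = P.natDegree := by
    rw [hPe, roots_multiset_prod_X_sub_C, natDegree_multiset_prod_X_sub_C_eq_card]
  have hPdeg : P.natDegree = q.natDegree + e.natDegree := by
    rw [he]; exact natDegree_mul hqm.ne_zero hem.ne_zero
  have hqle : Multiset.card q.roots ≤ q.natDegree := card_roots' q
  have hele : Multiset.card e.roots ≤ e.natDegree := card_roots' e
  have hqcard : Multiset.card q.roots = q.natDegree := by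
    have := hPcard
    rw [hroots, Multiset.card_add, hPdeg] at this
    omega
  constructor
  · -- q equals the product over its roots
    have hd : (q.roots.map fun r => X - C r).prod ∣ q := prod_multiset_X_sub_C_dvd q
    obtain ⟨w, hw⟩ := hd
    have hdm : ((q.roots.map fun r => X - C r).prod).Monic :=
      monic_multiset_prod_of_monic _ _ (fun r _ => monic_X_sub_C r)
    have hwm : w.Monic := Monic.of_mul_monic_left hdm (hw ▸ hqm)
    have hwdeg : w.natDegree = 0 := by
      have h1 := natDegree_mul hdm.ne_zero hwm.ne_zero
      rw [← hw, natDegree_multiset_prod_X_sub_C_eq_card, hqcard] at h1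
      omega
    have hw1 : w = 1 := by
      have h1 : w = C (w.coeff 0) := eq_C_of_natDegree_eq_zero hwdeg
      have h2 : w.coeff 0 = 1 := by
        have := hwm.coeff_natDegree
        rwa [hwdeg] at this
      rw [h1, h2, map_one]
    refine ⟨q.roots.map fun r => X - C r, ?_, ?_⟩
    · intro p hp
      obtain ⟨r, _, rfl⟩ := Multiset.mem_map.mp hp
      exact degree_X_sub_C r
    · rw [hw1, mul_one] at hw; exact hw
  · exact hqcard

/-- A crumbling monic polynomial of positive degree has a root. -/
lemma root_of_crumbles {q : Polynomial D} (h : Crumbles q) (hm : q.Monic)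
    (hd : q.natDegree ≠ 0) : ∃ r : D, q.IsRoot r := by
  have hcard := (crumbles_of_dvd h hm dvd_rfl hm).2
  have hne : q.roots ≠ 0 := by
    intro h0
    rw [h0] at hcard
    simp at hcard
    omega
  obtain ⟨r, hr⟩ := Multiset.exists_mem_of_ne_zero hne
  exact ⟨r, (mem_roots'.mp hr).2⟩

lemma chain_monic_natDegree (c : ℕ → D) (k : ℕ) :
    (chain c k).Monic ∧ (chain c k).natDegree = 2 ^ k := by
  induction k with
  | zero => exact ⟨monic_X, natDegree_X⟩
  | succ k ih =>
    obtain ⟨hm, hd⟩ := ih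
    have hm2 : ((chain c k) ^ 2).Monic := hm.pow 2
    have hd2 : ((chain c k) ^ 2).natDegree = 2 ^ (k + 1) := by
      rw [natDegree_pow, hd]; ring
    constructor
    · show ((chain c k) ^ 2 - C (c (k + 1))).Monic
      rw [sub_eq_add_neg]
      refine hm2.add_of_left ?_
      rw [degree_eq_natDegree hm2.ne_zero, hd2]
      calc (-C (c (k + 1))).degree ≤ 0 := by rw [degree_neg]; exact degree_C_le
        _ < ((2 : ℕ) ^ (k + 1) : ℕ) := by
            exact_mod_cast WithBot.coe_lt_coe.mpr (pow_pos (by norm_num) (k + 1))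
    · show ((chain c k) ^ 2 - C (c (k + 1))).natDegree = 2 ^ (k + 1)
      rw [natDegree_sub_C, hd2]

lemma chain_monic (c : ℕ → D) (k : ℕ) : (chain c k).Monic := (chain_monic_natDegree c k).1

lemma chain_comp (c : ℕ → D) (k : ℕ) :
    chain c (k + 1) = (chain (fun i => c (i + 1)) k).comp (X ^ 2 - C (c 1)) := by
  induction k with
  | zero => simp [chain]
  | succ k ih =>
    show (chain c (k + 1)) ^ 2 - C (c (k + 2)) = _
    rw [ih]
    show _ = ((chain (fun i => c (i + 1)) k) ^ 2 - C (c (k + 2))).comp (X ^ 2 - C (c 1))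
    rw [sub_comp, pow_comp, C_comp]

/-- If `g.comp (X^2 - C a)` crumbles, so does `g` (for monic `g`). -/
lemma peel (a : D) : ∀ (n : ℕ) (g : Polynomial D), g.Monic → g.natDegree = n →
    Crumbles (g.comp (X ^ 2 - C a)) → Crumbles g := by
  intro n
  induction n using Nat.strong_induction_on with
  | _ n ih =>
    intro g hg hdeg hcr
    rcases Nat.eq_zero_or_pos n with h0 | hpos
    · have h1 : g = C (g.coeff 0) := eq_C_of_natDegree_eq_zero (hdeg.trans h0)
      have h2 : g.coeff 0 = 1 := by
        have := hg.coeff_natDegree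
        rwa [hdeg, h0] at this
      exact ⟨0, by simp, by rw [h1, h2, map_one, Multiset.prod_zero]⟩
    · have hq1m : (X ^ 2 - C a).Monic := monic_X_pow_sub_C a two_ne_zero
      have hq1d : (X ^ 2 - C a).natDegree = 2 := natDegree_X_pow_sub_C
      have hGm : (g.comp (X ^ 2 - C a)).Monic := hg.comp hq1m (by rw [hq1d]; norm_num)
      have hGdeg : (g.comp (X ^ 2 - C a)).natDegree = n * 2 := by
        rw [natDegree_comp, hdeg, hq1d]
      obtain ⟨r, hr⟩ := root_of_crumbles hcr hGm (by rw [hGdeg]; omega)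
      have hρ : g.IsRoot (r ^ 2 - a) := by
        rw [IsRoot, eval_comp] at hr
        simpa using hr
      obtain ⟨g₂, hg2⟩ := dvd_iff_isRoot.mpr hρ
      have hg2m : g₂.Monic := Monic.of_mul_monic_left (monic_X_sub_C _) (hg2 ▸ hg)
      have hgdeg2 : g₂.natDegree = n - 1 := by
        have h1 : g.natDegree = (X - C (r ^ 2 - a)).natDegree + g₂.natDegree := by
          rw [hg2]; exact natDegree_mul (X_sub_C_ne_zero _) hg2m.ne_zero
        rw [natDegree_X_sub_C, hdeg] at h1
        omega
      have hcr2 : Crumbles (g₂.comp (X ^ 2 - C a)) := by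
        refine (crumbles_of_dvd hcr hGm ?_ (hg2m.comp hq1m (by rw [hq1d]; norm_num))).1
        refine ⟨(X - C (r ^ 2 - a)).comp (X ^ 2 - C a), ?_⟩
        rw [hg2, mul_comp]; ring
      obtain ⟨s, hs1, hs2⟩ := ih (n - 1) (by omega) g₂ hg2m hgdeg2 hcr2
      refine ⟨(X - C (r ^ 2 - a)) ::ₘ s, ?_, ?_⟩
      · intro q hq
        rcases Multiset.mem_cons.mp hq with h | h
        · rw [h]; exact degree_X_sub_C _
        · exact hs1 q h
      · rw [Multiset.prod_cons, ← hs2, ← hg2]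

/-- The key lifting step: distinct roots of `g` lift to nearly twice as many distinct
roots of `g.comp (X^2 - C a)`. -/
lemma step (htwo : (2 : D) ≠ 0) (g : Polynomial D) (a : D) (hg : g.Monic)
    (hcr : Crumbles (g.comp (X ^ 2 - C a)))
    (R : Finset D) (hR : ∀ ρ ∈ R, g.eval ρ = 0) :
    ∃ S : Finset D, (∀ x ∈ S, (g.comp (X ^ 2 - C a)).eval x = 0) ∧
      2 * R.card - 1 ≤ S.card ∧ (-a ∉ R → 2 * R.card ≤ S.card) := by
  classical
  have hq1m : (X ^ 2 - C a).Monic := monic_X_pow_sub_C a two_ne_zero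
  have hq1d : (X ^ 2 - C a).natDegree = 2 := natDegree_X_pow_sub_C
  have hGm : (g.comp (X ^ 2 - C a)).Monic := hg.comp hq1m (by rw [hq1d]; norm_num)
  have hsq : ∀ ρ ∈ R, ∃ u : D, u ^ 2 = a + ρ := by
    intro ρ hρ
    have hdvd : (X - C ρ) ∣ g := dvd_iff_isRoot.mpr (hR ρ hρ)
    obtain ⟨h, hh⟩ := hdvd
    have hdvd2 : (X ^ 2 - C (a + ρ)) ∣ g.comp (X ^ 2 - C a) := by
      refine ⟨h.comp (X ^ 2 - C a), ?_⟩
      rw [hh, mul_comp, sub_comp, X_comp, C_comp, C_add]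
      ring
    have hm2 : (X ^ 2 - C (a + ρ)).Monic := monic_X_pow_sub_C _ two_ne_zero
    have hcrum := (crumbles_of_dvd hcr hGm hdvd2 hm2).1
    obtain ⟨u, hu⟩ := root_of_crumbles hcrum hm2
      (by rw [natDegree_X_pow_sub_C]; norm_num)
    refine ⟨u, ?_⟩
    have : u ^ 2 - (a + ρ) = 0 := by simpa using hu
    linear_combination this
  let t : D → D := fun ρ => if h : ∃ u : D, u ^ 2 = a + ρ then h.choose else 0
  have ht : ∀ ρ ∈ R, (t ρ) ^ 2 = a + ρ := by
    intro ρ hρ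
    have h := hsq ρ hρ
    simp only [t, dif_pos h]
    exact h.choose_spec
  have hpairval : ∀ ρ ∈ R, ∀ x ∈ ({t ρ, -t ρ} : Finset D), x ^ 2 = a + ρ := by
    intro ρ hρ x hx
    rcases Finset.mem_insert.mp hx with h | h
    · rw [h]; exact ht ρ hρ
    · rw [Finset.mem_singleton.mp h, neg_pow, ht ρ hρ]; ring
  have hdisj : ∀ x ∈ R, ∀ y ∈ R, x ≠ y →
      Disjoint ({t x, -t x} : Finset D) ({t y, -t y} : Finset D) := by
    intro x hx y hy hxy
    rw [Finset.disjoint_left]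
    intro z hzx hzy
    have h1 := hpairval x hx z hzx
    have h2 := hpairval y hy z hzy
    exact hxy (by rw [← add_left_cancel (h1.symm.trans h2)])
  set S := R.biUnion (fun ρ => ({t ρ, -t ρ} : Finset D)) with hS
  have hcardS : S.card = ∑ ρ ∈ R, ({t ρ, -t ρ} : Finset D).card := Finset.card_biUnion hdisj
  have hroot : ∀ x ∈ S, (g.comp (X ^ 2 - C a)).eval x = 0 := by
    intro x hx
    obtain ⟨ρ, hρ, hxρ⟩ := Finset.mem_biUnion.mp hx
    rw [eval_comp]
    have hval : eval x (X ^ 2 - C a) = ρ := by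
      have := hpairval ρ hρ x hxρ
      simp only [eval_sub, eval_pow, eval_X, eval_C]
      linear_combination this
    rw [hval]
    exact hR ρ hρ
  have hpair2 : ∀ ρ ∈ R, ρ ≠ -a → ({t ρ, -t ρ} : Finset D).card = 2 := by
    intro ρ hρ hne
    refine Finset.card_pair ?_
    intro heq
    have h0 : t ρ = 0 := by
      have h2 : (2 : D) * t ρ = 0 := by linear_combination heq
      rcases mul_eq_zero.mp h2 with h | h
      · exact absurd h htwo
      · exact h
    have := ht ρ hρ
    rw [h0] at this
    apply hne
    linear_combination -this
  have hpair1 : ∀ ρ : D, 1 ≤ ({t ρ, -t ρ} : Finset D).card :=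
    fun ρ => Finset.card_pos.mpr ⟨t ρ, Finset.mem_insert_self _ _⟩
  by_cases hmem : -a ∈ R
  · have hsum : ∑ ρ ∈ R.erase (-a), ({t ρ, -t ρ} : Finset D).card +
        ({t (-a), -t (-a)} : Finset D).card = ∑ ρ ∈ R, ({t ρ, -t ρ} : Finset D).card :=
      Finset.sum_erase_add R (fun ρ => ({t ρ, -t ρ} : Finset D).card) hmem
    have herase : ∑ ρ ∈ R.erase (-a), ({t ρ, -t ρ} : Finset D).card = 2 * (R.card - 1) := by
      rw [Finset.sum_congr rfl (fun ρ hρ => hpair2 ρ (Finset.mem_of_mem_erase hρ)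
        (Finset.ne_of_mem_erase hρ))]
      rw [Finset.sum_const, Finset.card_erase_of_mem hmem, smul_eq_mul]
      ring
    have hRpos : 1 ≤ R.card := Finset.card_pos.mpr ⟨-a, hmem⟩
    have hbound : 2 * R.card - 1 ≤ S.card := by
      rw [hcardS, ← hsum, herase]
      have := hpair1 (-a)
      omega
    exact ⟨S, hroot, hbound, fun h => absurd hmem h⟩
  · have hall : S.card = 2 * R.card := by
      rw [hcardS, Finset.sum_congr rfl (fun ρ hρ => hpair2 ρ hρ (fun h => hmem (h ▸ hρ)))]
      rw [Finset.sum_const, smul_eq_mul]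
      ring
    exact ⟨S, hroot, by omega, fun _ => by omega⟩

lemma main_aux (htwo : (2 : D) ≠ 0) : ∀ (k : ℕ) (c : ℕ → D),
    Crumbles (chain c (k + 1)) → c (k + 1) ≠ 0 →
    ∃ S : Finset D, (∀ x ∈ S, (chain c (k + 1)).eval x = 0) ∧ 2 ^ k + 1 ≤ S.card := by
  intro k
  induction k with
  | zero =>
    intro c hcr hc
    have hcomp : chain c 1 = (X : Polynomial D).comp (X ^ 2 - C (c 1)) := by
      rw [X_comp]
      show (chain c 0) ^ 2 - C (c 1) = X ^ 2 - C (c 1)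
      rfl
    rw [hcomp] at hcr
    obtain ⟨S, hS, _, h2⟩ := step htwo X (c 1) monic_X hcr {0} (by simp)
    have hna : -(c 1) ∉ ({0} : Finset D) := by
      rw [Finset.mem_singleton, neg_eq_zero]
      exact hc
    refine ⟨S, ?_, ?_⟩
    · intro x hx; rw [hcomp]; exact hS x hx
    · have := h2 hna
      simpa using this
  | succ k ih =>
    intro c hcr hc
    have hcomp := chain_comp c (k + 1)
    have hgm : (chain (fun i => c (i + 1)) (k + 1)).Monic := chain_monic _ _
    rw [hcomp] at hcr
    have hgcr : Crumbles (chain (fun i => c (i + 1)) (k + 1)) :=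
      peel (c 1) _ _ hgm rfl hcr
    obtain ⟨R, hR, hcard⟩ := ih (fun i => c (i + 1)) hgcr hc
    obtain ⟨S, hS, h1, _⟩ := step htwo _ (c 1) hgm hcr R hR
    refine ⟨S, ?_, ?_⟩
    · intro x hx; rw [hcomp]; exact hS x hx
    · have hp : 2 ^ (k + 1) = 2 * 2 ^ k := by ring
      omega

end Helpers

theorem stmt_0 {D : Type*} [CommRing D] [IsDomain D] [UniqueFactorizationMonoid D]
    (htwo : (2 : D) ≠ 0) (k : ℕ) (hk : 1 ≤ k) (c : ℕ → D)
    (hcr : Crumbles (chain c k)) (hck : c k ≠ 0) :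
    ∃ S : Finset D, 2 ^ (k - 1) + 1 ≤ S.card ∧ ∀ r ∈ S, (chain c k).eval r = 0 := by
  obtain ⟨k', rfl⟩ : ∃ k', k = k' + 1 := ⟨k - 1, by omega⟩
  obtain ⟨S, hS, hcard⟩ := main_aux htwo k' c hcr hck
  exact ⟨S, by simpa using hcard, hS⟩
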